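/- Let (V₀, g) be a finite-dimensional positive definite real inner product space and let A₁, A₂ be algebraic curvature tensors on V₀ which are Einstein with Einstein constants a₁ and a₂ respectively. Then the Ricci operator ρ of the model M(V₀,g,A₁,A₂) = (V₀ × V₀, ⟨·,·⟩, A) is given by ρ(x⁺, x⁻) = (2a₁·x⁺ − 2a₂·x⁻, 2a₂·x⁺ + 2a₁·x⁻); that is, under the identification of V₀ × V₀ with V₀ ⊗ ℂ, ρ is complex scalar multiplication by 2a₁ + 2a₂·i. -/

import Mathlib

open TensorProduct

/-- `f : W⁴ → ℝ` is multilinear over `ℝ` in each of its four slots. -/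
def IsML {W : Type*} [AddCommGroup W] [Module ℝ W] (f : W → W → W → W → ℝ) : Prop :=
  (∀ x x' y z w, f (x + x') y z w = f x y z w + f x' y z w) ∧
  (∀ (c : ℝ) x y z w, f (c • x) y z w = c * f x y z w) ∧
  (∀ x y y' z w, f x (y + y') z w = f x y z w + f x y' z w) ∧
  (∀ (c : ℝ) x y z w, f x (c • y) z w = c * f x y z w) ∧
  (∀ x y z z' w, f x y (z + z') w = f x y z w + f x y z' w) ∧
  (∀ (c : ℝ) x y z w, f x y (c • z) w = c * f x y z w) ∧
  (∀ x y z w w', f x y z (w + w') = f x y z w + f x y z w') ∧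
  (∀ (c : ℝ) x y z w, f x y z (c • w) = c * f x y z w)

/-- The symmetries of the Riemann curvature tensor. -/
def IsCurvSym {W : Type*} [AddCommGroup W] [Module ℝ W] (f : W → W → W → W → ℝ) : Prop :=
  (∀ x y z w, f x y z w = - f y x z w) ∧
  (∀ x y z w, f x y z w = f z w x y) ∧
  (∀ x y z w, f x y z w + f y z x w + f z x y w = 0)

/-- An algebraic curvature tensor: a multilinear map with the curvature symmetries. -/
def IsACT {W : Type*} [AddCommGroup W] [Module ℝ W] (f : W → W → W → W → ℝ) : Prop :=
  IsML f ∧ IsCurvSym f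

/-- The defining value of `⟨ρ x, y⟩`: the trace of `z ↦ ½𝓡(z,x)y + ½𝓡(z,y)x`,
where `R` is the (curried) curvature operator. -/
noncomputable def ricciForm {V : Type*} [AddCommGroup V] [Module ℝ V]
    (R : V →ₗ[ℝ] V →ₗ[ℝ] V →ₗ[ℝ] V) (x y : V) : ℝ :=
  LinearMap.trace ℝ V
    (((1 : ℝ) / 2) • ((R.flip x).flip y) + ((1 : ℝ) / 2) • ((R.flip y).flip x))

/-- The Jacobi--Ricci commuting identity of Lemma 1 (3). -/
def JRComm {V : Type*} [AddCommGroup V] [Module ℝ V]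
    (A : V → V → V → V → ℝ) (ρ : V →ₗ[ℝ] V) : Prop :=
  ∀ v₁ v₂ v₃ v₄ : V,
    A (ρ v₁) v₂ v₃ v₄ = A v₁ (ρ v₂) v₃ v₄ ∧
    A v₁ (ρ v₂) v₃ v₄ = A v₁ v₂ (ρ v₃) v₄ ∧
    A v₁ v₂ (ρ v₃) v₄ = A v₁ v₂ v₃ (ρ v₄)

/-- The ℂ-valued tensor `A₁ + i·A₂`. -/
noncomputable def acx {W : Type*} [AddCommGroup W] [Module ℝ W]
    (A₁ A₂ : W → W → W → W → ℝ) (x y z w : W) : ℂ :=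
  (A₁ x y z w : ℂ) + Complex.I * (A₂ x y z w : ℂ)

/-- The complex multilinear extension `(A₁ + i·A₂)^ℂ` of `A₁ + i·A₂` to the
complexification of `W`, where `W × W` is identified with `W ⊗ ℂ` via
`(x⁺, x⁻) ↔ x⁺ + i·x⁻`. -/
noncomputable def acExt {W : Type*} [AddCommGroup W] [Module ℝ W]
    (A₁ A₂ : W → W → W → W → ℝ) (p q r s : W × W) : ℂ :=
  acx A₁ A₂ p.1 q.1 r.1 s.1
  + Complex.I * (acx A₁ A₂ p.2 q.1 r.1 s.1 + acx A₁ A₂ p.1 q.2 r.1 s.1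
      + acx A₁ A₂ p.1 q.1 r.2 s.1 + acx A₁ A₂ p.1 q.1 r.1 s.2)
  - (acx A₁ A₂ p.2 q.2 r.1 s.1 + acx A₁ A₂ p.2 q.1 r.2 s.1 + acx A₁ A₂ p.2 q.1 r.1 s.2
      + acx A₁ A₂ p.1 q.2 r.2 s.1 + acx A₁ A₂ p.1 q.2 r.1 s.2 + acx A₁ A₂ p.1 q.1 r.2 s.2)
  - Complex.I * (acx A₁ A₂ p.2 q.2 r.2 s.1 + acx A₁ A₂ p.2 q.2 r.1 s.2
      + acx A₁ A₂ p.2 q.1 r.2 s.2 + acx A₁ A₂ p.1 q.2 r.2 s.2)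
  + acx A₁ A₂ p.2 q.2 r.2 s.2

/-- The curvature tensor `A := Re((A₁ + i·A₂)^ℂ)` of the model `M(V₀,g,A₁,A₂)`. -/
noncomputable def modelA {W : Type*} [AddCommGroup W] [Module ℝ W]
    (A₁ A₂ : W → W → W → W → ℝ) (p q r s : W × W) : ℝ :=
  (acExt A₁ A₂ p q r s).re

/-- The inner product `⟨(x⁺,x⁻),(y⁺,y⁻)⟩ = g(x⁺,y⁺) − g(x⁻,y⁻)` of the model
`M(V₀,g,A₁,A₂)`. -/
def modelB {W : Type*} [AddCommGroup W] [Module ℝ W]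
    (g : LinearMap.BilinForm ℝ W) (p q : W × W) : ℝ :=
  g p.1 q.1 - g p.2 q.2

/-- `f` is Einstein with Einstein constant `a` on the positive definite inner product
space `(W, g)`: for every `g`-orthonormal basis `{e_k}` one has
`Σ_k f(x, e_k, e_k, y) = a·g(x,y)`. -/
def IsEinsteinWith {W : Type*} [AddCommGroup W] [Module ℝ W]
    (g : LinearMap.BilinForm ℝ W) (f : W → W → W → W → ℝ) (a : ℝ) : Prop :=
  ∀ (n : ℕ) (b : Module.Basis (Fin n) ℝ W),
    (∀ i j, g (b i) (b j) = if i = j then 1 else 0) →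
    ∀ x y, (∑ k, f x (b k) (b k) y) = a * g x y


section Helpers

variable {W : Type*} [AddCommGroup W] [Module ℝ W]

lemma IsML.zero₁ {f : W → W → W → W → ℝ} (h : IsML f) (y z w : W) : f 0 y z w = 0 := by
  have := h.2.1 0 0 y z w; simpa using this

lemma IsML.zero₂ {f : W → W → W → W → ℝ} (h : IsML f) (x z w : W) : f x 0 z w = 0 := by
  have := h.2.2.2.1 0 x 0 z w; simpa using this

lemma IsML.zero₃ {f : W → W → W → W → ℝ} (h : IsML f) (x y w : W) : f x y 0 w = 0 := by
  have := h.2.2.2.2.2.1 0 x y 0 w; simpa using this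

lemma IsML.zero₄ {f : W → W → W → W → ℝ} (h : IsML f) (x y z : W) : f x y z 0 = 0 := by
  have := h.2.2.2.2.2.2.2 0 x y z 0; simpa using this

/-- `f(e,x,y,e) = f(x,e,e,y)` for an ACT. -/
lemma IsACT.swap {f : W → W → W → W → ℝ} (h : IsACT f) (e x y : W) :
    f e x y e = f x e e y := by
  have h1 := h.2.1  -- antisym first two
  have h2 := h.2.2.1  -- pair swap
  have anti34 : ∀ a b c d, f a b c d = - f a b d c := by
    intro a b c d
    rw [h2 a b c d, h1 c d a b, h2 d c a b]
  rw [h1 e x y e, anti34 x e y e, neg_neg]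

lemma acx_zero₁ {A₁ A₂ : W → W → W → W → ℝ} (h₁ : IsML A₁) (h₂ : IsML A₂) (y z w : W) :
    acx A₁ A₂ 0 y z w = 0 := by simp [acx, h₁.zero₁, h₂.zero₁]

lemma acx_zero₄ {A₁ A₂ : W → W → W → W → ℝ} (h₁ : IsML A₁) (h₂ : IsML A₂) (x y z : W) :
    acx A₁ A₂ x y z 0 = 0 := by simp [acx, h₁.zero₄, h₂.zero₄]

lemma modelA_diag_pos {A₁ A₂ : W → W → W → W → ℝ} (h₁ : IsML A₁) (h₂ : IsML A₂)
    (e x₁ x₂ y₁ y₂ : W) :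
    modelA A₁ A₂ (e, 0) (x₁, x₂) (y₁, y₂) (e, 0)
      = A₁ e x₁ y₁ e - A₂ e x₂ y₁ e - A₂ e x₁ y₂ e - A₁ e x₂ y₂ e := by
  simp only [modelA, acExt, acx_zero₁ h₁ h₂, acx_zero₄ h₁ h₂]
  simp [acx, Complex.add_re, Complex.sub_re, Complex.mul_re]
  ring

lemma modelA_diag_neg {A₁ A₂ : W → W → W → W → ℝ} (h₁ : IsML A₁) (h₂ : IsML A₂)
    (e x₁ x₂ y₁ y₂ : W) :
    modelA A₁ A₂ (0, e) (x₁, x₂) (y₁, y₂) (0, e)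
      = -(A₁ e x₁ y₁ e - A₂ e x₂ y₁ e - A₂ e x₁ y₂ e - A₁ e x₂ y₂ e) := by
  simp only [modelA, acExt, acx_zero₁ h₁ h₂, acx_zero₄ h₁ h₂]
  simp [acx, Complex.add_re, Complex.sub_re, Complex.mul_re]
  ring

end Helpers

theorem statement6
    {V₀ : Type*} [AddCommGroup V₀] [Module ℝ V₀] [FiniteDimensional ℝ V₀]
    (g : LinearMap.BilinForm ℝ V₀)
    (hgsymm : ∀ x y, g x y = g y x)
    (hgpos : ∀ x : V₀, x ≠ 0 → 0 < g x x)
    (A₁ A₂ : V₀ → V₀ → V₀ → V₀ → ℝ) (hA₁ : IsACT A₁) (hA₂ : IsACT A₂)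
    (a₁ a₂ : ℝ)
    (hE₁ : IsEinsteinWith g A₁ a₁) (hE₂ : IsEinsteinWith g A₂ a₂)
    (R : (V₀ × V₀) →ₗ[ℝ] (V₀ × V₀) →ₗ[ℝ] (V₀ × V₀) →ₗ[ℝ] (V₀ × V₀))
    (hR : ∀ p q r s, modelB g (R p q r) s = modelA A₁ A₂ p q r s)
    (ρ : (V₀ × V₀) →ₗ[ℝ] (V₀ × V₀))
    (hρ : ∀ p q, modelB g (ρ p) q = ricciForm R p q) :
    ∀ x y : V₀, ρ (x, y) = ((2 * a₁) • x - (2 * a₂) • y, (2 * a₂) • x + (2 * a₁) • y) := by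
  intro x y
  classical
  -- orthonormal basis for g
  obtain ⟨n, b, honb⟩ : ∃ (n : ℕ) (b : Module.Basis (Fin n) ℝ V₀),
      ∀ i j, g (b i) (b j) = if i = j then 1 else 0 := by
    letI core : InnerProductSpace.Core ℝ V₀ :=
      { inner := fun x y => g x y
        conj_inner_symm := fun x y => by simpa using hgsymm y x
        re_inner_nonneg := fun x => by
          rcases eq_or_ne x 0 with h | h
          · simp [h]
          · exact le_of_lt (by simpa using hgpos x h)
        add_left := fun x y z => by simp
        smul_left := fun x y r => by simp
        definite := fun x hx => by
          by_contra h
          exact absurd hx (ne_of_gt (by simpa using hgpos x h)) }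
    letI : NormedAddCommGroup V₀ := core.toNormedAddCommGroup
    letI : InnerProductSpace ℝ V₀ := InnerProductSpace.ofCore core.toCore
    refine ⟨Module.finrank ℝ V₀, (stdOrthonormalBasis ℝ V₀).toBasis, fun i j => ?_⟩
    have := (stdOrthonormalBasis ℝ V₀).orthonormal
    rw [orthonormal_iff_ite] at this
    have h := this i j
    simp only [OrthonormalBasis.coe_toBasis] at h ⊢
    exact h
  -- coordinates via g
  have hcoord : ∀ (k : Fin n) (v : V₀), b.repr v k = g (b k) v := by
    intro k
    have h : (g (b k) : V₀ →ₗ[ℝ] ℝ) = b.coord k := by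
      refine b.ext fun i => ?_
      simp [honb, Module.Basis.coord_apply, Finsupp.single_apply, eq_comm]
    intro v
    rw [← Module.Basis.coord_apply, ← h]
  -- the product basis evaluates as expected
  have hBl : ∀ k : Fin n, (b.prod b) (Sum.inl k) = ((b k : V₀), (0 : V₀)) := fun k =>
    Prod.ext (Module.Basis.prod_apply_inl_fst b b k) (Module.Basis.prod_apply_inl_snd b b k)
  have hBr : ∀ k : Fin n, (b.prod b) (Sum.inr k) = ((0 : V₀), (b k : V₀)) := fun k =>
    Prod.ext (Module.Basis.prod_apply_inr_fst b b k) (Module.Basis.prod_apply_inr_snd b b k)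
  -- trace formula
  have htr : ∀ T : (V₀ × V₀) →ₗ[ℝ] (V₀ × V₀),
      LinearMap.trace ℝ (V₀ × V₀) T
        = (∑ k, b.repr (T (b k, 0)).1 k) + ∑ k, b.repr (T (0, b k)).2 k := by
    intro T
    rw [LinearMap.trace_eq_matrix_trace ℝ (b.prod b) T]
    simp only [Matrix.trace, Matrix.diag, LinearMap.toMatrix_apply]
    rw [Fintype.sum_sum_type]
    simp only [Module.Basis.prod_repr_inl, Module.Basis.prod_repr_inr, hBl, hBr]
  -- linearity of modelB in the first slot for the combos we need
  have hmbB : ∀ (u v s : V₀ × V₀),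
      modelB g (((1:ℝ)/2) • u + ((1:ℝ)/2) • v) s
        = ((1:ℝ)/2) * modelB g u s + ((1:ℝ)/2) * modelB g v s := by
    intro u v s
    simp only [modelB, Prod.fst_add, Prod.snd_add, Prod.smul_fst, Prod.smul_snd,
      map_add, map_smul, LinearMap.add_apply, LinearMap.smul_apply, smul_eq_mul]
    ring
  -- sums of diagonal curvature terms via Einstein
  have hsum : ∀ (A : V₀ → V₀ → V₀ → V₀ → ℝ) (a : ℝ), IsACT A → IsEinsteinWith g A a →
      ∀ u v : V₀, (∑ k, A (b k) u v (b k)) = a * g u v := by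
    intro A a hA hE u v
    have h : ∀ k : Fin n, A (b k) u v (b k) = A u (b k) (b k) v := fun k => hA.swap (b k) u v
    rw [Finset.sum_congr rfl fun k _ => h k]
    exact hE n b honb u v
  -- main evaluation of the Ricci form
  set t : V₀ × V₀ := ((2 * a₁) • x - (2 * a₂) • y, (2 * a₂) • x + (2 * a₁) • y) with ht
  have hval : ∀ s : V₀ × V₀, modelB g (ρ (x, y)) s = modelB g t s := by
    rintro ⟨y₁, y₂⟩
    rw [hρ (x, y) (y₁, y₂), ricciForm]
    set T : (V₀ × V₀) →ₗ[ℝ] (V₀ × V₀) :=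
      ((1:ℝ)/2) • ((R.flip (x, y)).flip (y₁, y₂)) + ((1:ℝ)/2) • ((R.flip (y₁, y₂)).flip (x, y))
      with hT
    have hTz : ∀ z : V₀ × V₀,
        T z = ((1:ℝ)/2) • (R z (x, y) (y₁, y₂)) + ((1:ℝ)/2) • (R z (y₁, y₂) (x, y)) := by
      intro z
      simp [hT, LinearMap.flip_apply]
    have hterm : ∀ (z : V₀ × V₀),
        modelB g (T z) z
          = ((1:ℝ)/2) * modelA A₁ A₂ z (x, y) (y₁, y₂) z
            + ((1:ℝ)/2) * modelA A₁ A₂ z (y₁, y₂) (x, y) z := by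
      intro z
      rw [hTz z, hmbB, hR, hR]
    have h1 : ∀ k : Fin n, b.repr (T (b k, 0)).1 k
        = ((1:ℝ)/2) * modelA A₁ A₂ ((b k : V₀), (0:V₀)) (x, y) (y₁, y₂) (b k, 0)
          + ((1:ℝ)/2) * modelA A₁ A₂ ((b k : V₀), (0:V₀)) (y₁, y₂) (x, y) (b k, 0) := by
      intro k
      rw [hcoord k]
      have : g (b k) (T (b k, 0)).1 = modelB g (T (b k, 0)) (b k, 0) := by
        simp [modelB, hgsymm (b k) (T (b k, 0)).1]
      rw [this, hterm]
    have h2 : ∀ k : Fin n, b.repr (T (0, b k)).2 k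
        = -(((1:ℝ)/2) * modelA A₁ A₂ ((0:V₀), (b k : V₀)) (x, y) (y₁, y₂) (0, b k)
          + ((1:ℝ)/2) * modelA A₁ A₂ ((0:V₀), (b k : V₀)) (y₁, y₂) (x, y) (0, b k)) := by
      intro k
      rw [hcoord k]
      have : g (b k) (T (0, b k)).2 = - modelB g (T (0, b k)) (0, b k) := by
        simp [modelB, hgsymm (b k) (T (0, b k)).2]
      rw [this, hterm]
    have hA₁ml := hA₁.1
    have hA₂ml := hA₂.1
    calc LinearMap.trace ℝ (V₀ × V₀) T
        = (∑ k, b.repr (T (b k, 0)).1 k) + ∑ k, b.repr (T (0, b k)).2 k := htr T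
      _ = (∑ k, ((A₁ (b k) x y₁ (b k) - A₂ (b k) y y₁ (b k)
              - A₂ (b k) x y₂ (b k) - A₁ (b k) y y₂ (b k))
            + (A₁ (b k) y₁ x (b k) - A₂ (b k) y₂ x (b k)
              - A₂ (b k) y₁ y (b k) - A₁ (b k) y₂ y (b k)))) := by
          rw [← Finset.sum_add_distrib]
          refine Finset.sum_congr rfl fun k _ => ?_
          rw [h1 k, h2 k, modelA_diag_pos hA₁ml hA₂ml, modelA_diag_pos hA₁ml hA₂ml,
            modelA_diag_neg hA₁ml hA₂ml, modelA_diag_neg hA₁ml hA₂ml]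
          ring
      _ = (a₁ * g x y₁ - a₂ * g y y₁ - a₂ * g x y₂ - a₁ * g y y₂)
          + (a₁ * g y₁ x - a₂ * g y₂ x - a₂ * g y₁ y - a₁ * g y₂ y) := by
          simp only [Finset.sum_add_distrib, Finset.sum_sub_distrib,
            hsum A₁ a₁ hA₁ hE₁, hsum A₂ a₂ hA₂ hE₂]
      _ = modelB g t (y₁, y₂) := by
          simp only [ht, modelB, map_sub, map_add, map_smul, LinearMap.sub_apply,
            LinearMap.add_apply, LinearMap.smul_apply, smul_eq_mul]
          rw [hgsymm y₁ x, hgsymm y₂ x, hgsymm y₁ y, hgsymm y₂ y]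
          ring
  -- nondegeneracy
  have hd : ∀ s : V₀ × V₀, modelB g (ρ (x, y) - t) s = 0 := by
    intro s
    have : modelB g (ρ (x, y) - t) s = modelB g (ρ (x, y)) s - modelB g t s := by
      simp only [modelB, Prod.fst_sub, Prod.snd_sub, map_sub, LinearMap.sub_apply]
      ring
    rw [this, hval s, sub_self]
  set d : V₀ × V₀ := ρ (x, y) - t with hdd
  have h1 : d.1 = 0 := by
    by_contra h
    have := hd (d.1, 0)
    simp [modelB] at this
    exact absurd this (ne_of_gt (hgpos _ h))
  have h2 : d.2 = 0 := by
    by_contra h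
    have := hd (0, d.2)
    simp [modelB] at this
    exact absurd this (ne_of_gt (hgpos _ h))
  have : d = 0 := Prod.ext_iff.mpr ⟨h1, h2⟩
  have := sub_eq_zero.mp this
  rw [ht] at this
  exact this
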